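/- Let σ : ℝ → ℝ be a continuous function that is not equal to any polynomial. Then for every dimension d ≥ 1, the set of shallow neural network functions x ↦ ∑_{i=1}^m a_i σ(w_i · x + b_i) (over all m ≥ 1, a_i, b_i ∈ ℝ, w_i ∈ ℝ^d) is dense in C([0,1]^d, ℝ) with respect to the supremum norm. -/

import Mathlib

open scoped BigOperators
open MeasureTheory Convolution Metric Filter ContinuousLinearMap Set Topology Polynomial

namespace UANP
noncomputable section
variable {d : ℕ}

abbrev Kc (d : ℕ) : Set (Fin d → ℝ) := Set.Icc 0 1

def dot (w : Fin d → ℝ) (x : Kc d) : ℝ := ∑ j, w j * (x : Fin d → ℝ) j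

lemma cont_dot (w : Fin d → ℝ) : Continuous fun x : Kc d => dot w x :=
  continuous_finset_sum _ fun j _ =>
    continuous_const.mul ((continuous_apply j).comp continuous_subtype_val)

lemma abs_dot_le (w : Fin d → ℝ) (x : Kc d) : |dot w x| ≤ ∑ j, |w j| := by
  refine (Finset.abs_sum_le_sum_abs _ _).trans (Finset.sum_le_sum fun j _ => ?_)
  rw [abs_mul]
  have hx0 : 0 ≤ (x : Fin d → ℝ) j := x.2.1 j
  have hx1 : (x : Fin d → ℝ) j ≤ 1 := x.2.2 j
  calc |w j| * |(x : Fin d → ℝ) j| ≤ |w j| * 1 := by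
        refine mul_le_mul_of_nonneg_left ?_ (abs_nonneg _)
        rw [abs_of_nonneg hx0]; exact hx1
    _ = |w j| := mul_one _
lemma dot_smul (c : ℝ) (w : Fin d → ℝ) (x : Kc d) : dot (c • w) x = c * dot w x := by
  simp [dot, Finset.mul_sum, mul_assoc]

lemma dot_add (w v : Fin d → ℝ) (x : Kc d) : dot (w + v) x = dot w x + dot v x := by
  simp [dot, add_mul, Finset.sum_add_distrib]

variable (σ : ℝ → ℝ)

def SS (d : ℕ) : Set C(Kc d, ℝ) := {g | ∃ w b, ∀ x, g x = σ (dot w x + b)}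

def MM (d : ℕ) : Submodule ℝ C(Kc d, ℝ) := (Submodule.span ℝ (SS σ d)).topologicalClosure

lemma isClosed_MM : IsClosed (MM σ d : Set C(Kc d, ℝ)) :=
  Submodule.isClosed_topologicalClosure _

lemma mem_MM_of_eq (w : Fin d → ℝ) (b : ℝ) (g : C(Kc d, ℝ))
    (hg : ∀ x, g x = σ (dot w x + b)) : g ∈ MM σ d :=
  Submodule.le_topologicalClosure _ (Submodule.subset_span ⟨w, b, hg⟩)

def Pw (w : Fin d → ℝ) : C(Kc d, ℝ) := ⟨fun x => dot w x, cont_dot w⟩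


/-- Step B : mollified ridge functions are in the closed span. -/
lemma stepB (hcont : Continuous σ) (φ : ContDiffBump (0:ℝ)) (w : Fin d → ℝ) (b : ℝ)
    (g : C(Kc d, ℝ))
    (hg : ∀ x, g x = (φ.normed volume ⋆[lsmul ℝ ℝ, volume] σ) (dot w x + b)) :
    g ∈ MM σ d := by
  classical
  set ψ : ℝ → ℝ := φ.normed volume with hψ
  -- the measure
  set μ' : Measure ℝ := volume.withDensity (fun y => ENNReal.ofReal (ψ y)) with hμ'
  have hψc : Continuous ψ := φ.continuous_normed
  have hψm : Measurable fun y => ENNReal.ofReal (ψ y) := (ENNReal.continuous_ofReal.comp hψc).measurable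
  have hprob : IsProbabilityMeasure μ' := by
    constructor
    rw [hμ', withDensity_apply _ MeasurableSet.univ, setLIntegral_univ]
    rw [← ofReal_integral_eq_lintegral_ofReal φ.integrable_normed
      (Filter.Eventually.of_forall φ.nonneg_normed), φ.integral_normed, ENNReal.ofReal_one]
  -- the C(K)-valued integrand
  have hcur : Continuous fun p : ℝ × Kc d => σ (dot w p.2 + b - p.1) := by
    refine hcont.comp ?_
    exact ((cont_dot w).comp continuous_snd).add continuous_const |>.sub continuous_fst
  set H : ℝ → C(Kc d, ℝ) := fun y => ((ContinuousMap.mk _ hcur).curry y) with hH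
  have hHy : ∀ y x, H y x = σ (dot w x + b - y) := fun y x => rfl
  have hHmem : ∀ y, H y ∈ MM σ d := fun y =>
    mem_MM_of_eq σ w (b - y) _ (fun x => by rw [hHy]; ring_nf)
  have hHcont : Continuous H := (ContinuousMap.mk _ hcur).curry.continuous
  -- integrability
  obtain ⟨C, hC⟩ := (isCompact_closedBall (0:ℝ) φ.rOut).exists_bound_of_continuousOn
    (hHcont.continuousOn (s := closedBall 0 φ.rOut))
  have haeball : ∀ᵐ y ∂μ', y ∈ closedBall (0:ℝ) φ.rOut := by
    rw [ae_iff, hμ']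
    change (volume.withDensity fun y => ENNReal.ofReal (ψ y)) (closedBall (0:ℝ) φ.rOut)ᶜ = 0
    rw [withDensity_apply _ (measurableSet_closedBall.compl)]
    have : ∀ y ∈ (closedBall (0:ℝ) φ.rOut)ᶜ, ENNReal.ofReal (ψ y) = 0 := by
      intro y hy
      have : ψ y = 0 := by
        by_contra h
        have := φ.support_normed_eq (μ := volume) ▸ Function.mem_support.2 h
        exact hy (ball_subset_closedBall this)
      simp [this]
    calc ∫⁻ y in (closedBall (0:ℝ) φ.rOut)ᶜ, ENNReal.ofReal (ψ y) ∂volume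
        = ∫⁻ y in (closedBall (0:ℝ) φ.rOut)ᶜ, 0 ∂volume := by
          exact setLIntegral_congr_fun measurableSet_closedBall.compl
            this
      _ = 0 := lintegral_zero
  have hInt : Integrable H μ' := by
    refine Integrable.mono' (g := fun _ => C) (integrable_const C)
      hHcont.aestronglyMeasurable ?_
    filter_upwards [haeball] with y hy
    exact hC y hy
  -- the integral is in MM
  have hmem : ∫ y, H y ∂μ' ∈ MM σ d := by
    refine (Submodule.span ℝ (SS σ d)).topologicalClosure.convex.integral_mem
      (isClosed_MM σ) (Filter.Eventually.of_forall hHmem) hInt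
  -- identify the integral with g
  have : g = ∫ y, H y ∂μ' := by
    ext x
    have := (ContinuousMap.evalCLM ℝ x).integral_comp_comm hInt
    rw [show ∫ y, H y ∂μ' = ∫ y, H y ∂μ' from rfl] at this
    have hev : (ContinuousMap.evalCLM ℝ x) (∫ y, H y ∂μ') = ∫ y, H y x ∂μ' := this.symm
    rw [hg x, show (∫ y, H y ∂μ') x = (ContinuousMap.evalCLM ℝ x) (∫ y, H y ∂μ') from rfl, hev]
    have hμint : ∫ y, H y x ∂μ' = ∫ y, ψ y • H y x ∂volume := by
      rw [hμ']
      rw [show (fun y => ENNReal.ofReal (ψ y)) = fun y => ((Real.toNNReal (ψ y) : NNReal) : ENNReal) from rfl]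
      rw [integral_withDensity_eq_integral_smul hψc.measurable.real_toNNReal]
      congr 1; ext y
      simp [NNReal.smul_def, Real.coe_toNNReal _ (φ.nonneg_normed y)]
      exact Or.inl (φ.nonneg_normed y)
    rw [hμint]
    rw [convolution_def]
    congr 1
  rw [this]; exact hmem


lemma stepC_aux (f : ℝ → ℝ) (hf : ContDiff ℝ (⊤:ℕ∞) f)
    (hbase : ∀ (w : Fin d → ℝ) (b : ℝ) (g : C(Kc d, ℝ)),
      (∀ x, g x = f (dot w x + b)) → g ∈ MM σ d) :
    ∀ (k : ℕ) (w : Fin d → ℝ) (b lam : ℝ) (g : C(Kc d, ℝ)),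
      (∀ x, g x = dot w x ^ k * iteratedDeriv k f (lam * dot w x + b)) → g ∈ MM σ d := by
  have hder : ∀ m : ℕ, Differentiable ℝ (iteratedDeriv m f) := fun m =>
    hf.differentiable_iteratedDeriv m (by exact_mod_cast (WithTop.coe_lt_top m : (m:ℕ∞) < ⊤))
  have hcontIter : ∀ m : ℕ, Continuous (iteratedDeriv m f) := fun m => (hder m).continuous
  intro k
  induction k with
  | zero =>
    intro w b lam g hg
    refine hbase (lam • w) b g (fun x => ?_)
    rw [hg x]; simp [iteratedDeriv_zero, dot_smul]
  | succ k ih =>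
    intro w b lam g hg
    set R : ℝ := ∑ j, |w j| with hR
    have hR0 : 0 ≤ R := Finset.sum_nonneg fun j _ => abs_nonneg _
    set F : ℝ → C(Kc d, ℝ) := fun mu =>
      ⟨fun x => dot w x ^ k * iteratedDeriv k f (mu * dot w x + b),
       ((cont_dot w).pow k).mul ((hcontIter k).comp
         ((continuous_const.mul (cont_dot w)).add continuous_const))⟩ with hF
    have hFmem : ∀ mu, F mu ∈ MM σ d := fun mu => ih w b mu (F mu) (fun x => rfl)
    set L : C(Kc d, ℝ) :=
      ⟨fun x => dot w x ^ (k+1) * iteratedDeriv (k+1) f (lam * dot w x + b),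
       ((cont_dot w).pow (k+1)).mul ((hcontIter (k+1)).comp
         ((continuous_const.mul (cont_dot w)).add continuous_const))⟩ with hL
    set f1 : ℝ → ℝ := iteratedDeriv (k+1) f with hf1
    have key : Tendsto (fun mu => (mu - lam)⁻¹ • (F mu - F lam)) (𝓝[≠] lam) (𝓝 L) := by
      rw [Metric.tendsto_nhdsWithin_nhds]
      intro ε hε
      have hUC := (isCompact_closedBall b ((|lam|+1)*R)).uniformContinuousOn_of_continuous
        ((hcontIter (k+1)).continuousOn)
      rw [Metric.uniformContinuousOn_iff] at hUC
      set ε' : ℝ := ε / (2 * (R+1)^(k+1)) with hε'def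
      have hRp : (0:ℝ) < (R+1)^(k+1) := pow_pos (by linarith) _
      have hε' : 0 < ε' := by positivity
      obtain ⟨δ₀, hδ₀, hδ₀'⟩ := hUC ε' hε'
      refine ⟨min 1 (δ₀/(R+1)), by positivity, ?_⟩
      intro mu hmu hdist
      have hne : mu - lam ≠ 0 := sub_ne_zero.2 hmu
      have hd1 : |mu - lam| < 1 := lt_of_lt_of_le (by rw [Real.dist_eq] at hdist; exact hdist) (min_le_left _ _)
      have hd2 : |mu - lam| < δ₀/(R+1) := lt_of_lt_of_le (by rw [Real.dist_eq] at hdist; exact hdist) (min_le_right _ _)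
      have habs : ∀ t ∈ Set.uIcc lam mu, |t - lam| ≤ |mu - lam| := by
        intro t ht
        rw [Set.mem_uIcc] at ht
        rw [abs_sub_le_iff]
        rcases ht with ⟨h1,h2⟩|⟨h1,h2⟩
        · exact ⟨by calc t - lam ≤ mu - lam := by linarith
                  _ ≤ |mu - lam| := le_abs_self _,
                 by calc lam - t ≤ 0 := by linarith
                  _ ≤ |mu - lam| := abs_nonneg _⟩
        · exact ⟨by calc t - lam ≤ 0 := by linarith
                  _ ≤ |mu - lam| := abs_nonneg _,
                 by calc lam - t ≤ lam - mu := by linarith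
                  _ ≤ |mu - lam| := by rw [abs_sub_comm]; exact le_abs_self _⟩
      have hmemJ : ∀ u : ℝ, |u| ≤ R → ∀ t ∈ Set.uIcc lam mu, t*u+b ∈ closedBall b ((|lam|+1)*R) := by
        intro u hu t ht
        rw [mem_closedBall, Real.dist_eq, add_sub_cancel_right, abs_mul]
        have h1 : |t| ≤ |lam| + 1 := by
          have := habs t ht
          have h2 : |t| - |lam| ≤ |t - lam| := by
            have := abs_sub_abs_le_abs_sub t lam; linarith
          linarith
        exact mul_le_mul h1 hu (abs_nonneg _) (by positivity)
      have hpt : ∀ x : Kc d, |F mu x - F lam x - (mu - lam) * L x| ≤ (ε/2) * |mu - lam| := by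
        intro x
        set u : ℝ := dot w x with hu'
        have hu : |u| ≤ R := abs_dot_le w x
        set c : ℝ := u * f1 (lam * u + b) with hc
        set Gg : ℝ → ℝ := fun t => iteratedDeriv k f (t * u + b) - t * c with hGg
        have hGder : ∀ t ∈ Set.uIcc lam mu,
            HasDerivWithinAt Gg (u * f1 (t*u+b) - c) (Set.uIcc lam mu) t := by
          intro t ht
          have hin : HasDerivAt (fun s : ℝ => s * u + b) u t :=
            (hasDerivAt_mul_const u).add_const b
          have h1 : HasDerivAt (iteratedDeriv k f) (f1 (t*u+b)) (t*u+b) := by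
            have h := ((hder k) (t*u+b)).hasDerivAt
            rwa [hf1, iteratedDeriv_succ]
          have h2 : HasDerivAt (fun s : ℝ => iteratedDeriv k f (s * u + b)) (f1 (t*u+b) * u) t :=
            HasDerivAt.comp (h₂ := iteratedDeriv k f) (h := fun s : ℝ => s * u + b) t h1 hin
          have h3 : HasDerivAt Gg (f1 (t*u+b) * u - c) t := h2.sub (hasDerivAt_mul_const c)
          have : f1 (t*u+b) * u - c = u * f1 (t*u+b) - c := by ring
          rw [← this]
          exact h3.hasDerivWithinAt
        have hbound : ∀ t ∈ Set.uIcc lam mu, ‖u * f1 (t*u+b) - c‖ ≤ R * ε' := by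
          intro t ht
          rw [hc, ← mul_sub, Real.norm_eq_abs, abs_mul]
          refine mul_le_mul hu ?_ (abs_nonneg _) hR0
          have hmem1 := hmemJ u hu t ht
          have hmem2 := hmemJ u hu lam (Set.left_mem_uIcc)
          have hdlt : dist (t*u+b) (lam*u+b) < δ₀ := by
            rw [Real.dist_eq]
            have : t*u+b - (lam*u+b) = (t-lam)*u := by ring
            rw [this, abs_mul]
            calc |t-lam| * |u| ≤ |mu-lam| * (R+1) := by
                  refine mul_le_mul (habs t ht) (by linarith) (abs_nonneg _) (abs_nonneg _)
              _ < (δ₀/(R+1)) * (R+1) := by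
                  refine mul_lt_mul_of_pos_right hd2 (by linarith)
              _ = δ₀ := by field_simp
          have := hδ₀' _ hmem1 _ hmem2 hdlt
          rw [Real.dist_eq] at this
          exact le_of_lt this
        have hGdiff := (convex_uIcc lam mu).norm_image_sub_le_of_norm_hasDerivWithin_le
          hGder hbound Set.left_mem_uIcc Set.right_mem_uIcc
        rw [Real.norm_eq_abs, Real.norm_eq_abs] at hGdiff
        have heq : F mu x - F lam x - (mu - lam) * L x = u^k * (Gg mu - Gg lam) := by
          show dot w x ^ k * iteratedDeriv k f (mu * dot w x + b)
              - dot w x ^ k * iteratedDeriv k f (lam * dot w x + b)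
              - (mu - lam) * (dot w x ^ (k+1) * iteratedDeriv (k+1) f (lam * dot w x + b))
              = u^k * (Gg mu - Gg lam)
          rw [hGg, hc, hf1, ← hu']
          ring
        rw [heq, abs_mul]
        calc |u^k| * |Gg mu - Gg lam| ≤ R^k * (R * ε' * |mu - lam|) := by
              refine mul_le_mul ?_ hGdiff (abs_nonneg _) (pow_nonneg hR0 _)
              rw [abs_pow]; exact pow_le_pow_left₀ (abs_nonneg _) hu _
          _ ≤ (R+1)^(k+1) * ε' * |mu - lam| := by
              have h1 : R^k * R ≤ (R+1)^(k+1) := by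
                calc R^k * R = R^(k+1) := by ring
                  _ ≤ (R+1)^(k+1) := pow_le_pow_left₀ hR0 (by linarith) _
              calc R^k * (R * ε' * |mu-lam|) = (R^k * R) * ε' * |mu-lam| := by ring
                _ ≤ (R+1)^(k+1) * ε' * |mu-lam| := by
                    refine mul_le_mul_of_nonneg_right (mul_le_mul_of_nonneg_right h1 (le_of_lt hε')) (abs_nonneg _)
          _ = (ε/2) * |mu - lam| := by
              rw [hε'def]; field_simp
      rw [dist_eq_norm]
      have hnorm : ‖(mu - lam)⁻¹ • (F mu - F lam) - L‖ ≤ ε/2 := by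
        rw [ContinuousMap.norm_le _ (by linarith)]
        intro x
        have hev : ((mu - lam)⁻¹ • (F mu - F lam) - L) x
            = (mu - lam)⁻¹ * (F mu x - F lam x - (mu - lam) * L x) := by
          simp only [ContinuousMap.sub_apply, ContinuousMap.smul_apply, smul_eq_mul]
          field_simp
        rw [hev, Real.norm_eq_abs, abs_mul, abs_inv]
        calc |mu-lam|⁻¹ * |F mu x - F lam x - (mu - lam) * L x|
            ≤ |mu-lam|⁻¹ * ((ε/2) * |mu-lam|) := by
              refine mul_le_mul_of_nonneg_left (hpt x) (by positivity)
          _ = ε/2 := by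
              field_simp
        
      exact lt_of_le_of_lt hnorm (by linarith)
    have hLmem : L ∈ MM σ d := by
      refine (isClosed_MM σ).mem_of_tendsto key ?_
      filter_upwards with mu
      exact Submodule.smul_mem _ _ (Submodule.sub_mem _ (hFmem mu) (hFmem lam))
    have hgL : g = L := ContinuousMap.ext fun x => hg x
    rw [hgL]; exact hLmem

lemma stepC (f : ℝ → ℝ) (hf : ContDiff ℝ (⊤:ℕ∞) f)
    (hbase : ∀ (w : Fin d → ℝ) (b : ℝ) (g : C(Kc d, ℝ)),
      (∀ x, g x = f (dot w x + b)) → g ∈ MM σ d) :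
    ∀ (k : ℕ) (w : Fin d → ℝ) (b : ℝ) (g : C(Kc d, ℝ)),
      (∀ x, g x = dot w x ^ k * iteratedDeriv k f b) → g ∈ MM σ d := by
  intro k w b g hg
  refine stepC_aux σ f hf hbase k w b 0 g (fun x => ?_)
  rw [hg x]; norm_num

/-- antiderivative of a polynomial -/
lemma exists_antideriv (p : Polynomial ℝ) :
    ∃ q : Polynomial ℝ, q.derivative = p ∧ q.degree ≤ p.degree + 1 := by
  classical
  refine ⟨p.sum fun n a => C (a/(n+1)) * X^(n+1), ?_, ?_⟩
  · rw [Polynomial.sum, map_sum]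
    have : ∀ n ∈ p.support, derivative (C (p.coeff n / (n+1)) * X^(n+1)) = C (p.coeff n) * X^n := by
      intro n hn
      rw [Polynomial.derivative_C_mul_X_pow, Nat.add_sub_cancel]
      congr 2
      have hne : ((n:ℝ)+1) ≠ 0 := by positivity
      push_cast
      field_simp
    rw [Finset.sum_congr rfl this]
    conv_rhs => rw [← Polynomial.sum_C_mul_X_pow_eq p]
    rfl
  · rcases eq_or_ne p 0 with rfl | hp
    · simp [Polynomial.sum]
    · refine (Polynomial.degree_sum_le _ _).trans ?_
      rw [Finset.sup_le_iff]
      intro n hn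
      refine (Polynomial.degree_C_mul_X_pow_le _ _).trans ?_
      rw [Polynomial.degree_eq_natDegree hp]
      exact_mod_cast Nat.cast_le.2 (Nat.succ_le_succ (Polynomial.le_natDegree_of_mem_supp n hn))

/-- a smooth function with vanishing k-th derivative is a polynomial of degree < k -/
lemma poly_of_iteratedDeriv_eq_zero :
    ∀ (k : ℕ) (f : ℝ → ℝ), ContDiff ℝ (⊤:ℕ∞) f → (∀ t, iteratedDeriv k f t = 0) →
    ∃ p : Polynomial ℝ, p.degree < (k : ℕ) ∧ ∀ t, f t = p.eval t := by
  intro k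
  induction k with
  | zero =>
    intro f _ h0
    exact ⟨0, by simp, fun t => by simpa [iteratedDeriv_zero] using h0 t⟩
  | succ k ih =>
    intro f hf h0
    have hf' : ContDiff ℝ (⊤:ℕ∞) (deriv f) := (contDiff_infty_iff_deriv.1 hf).2
    have hdf : Differentiable ℝ f := (contDiff_infty_iff_deriv.1 hf).1
    obtain ⟨p, hdeg, hp⟩ := ih (deriv f) hf' (fun t => by
      have := h0 t; rwa [iteratedDeriv_succ'] at this)
    obtain ⟨q, hq, hqdeg⟩ := exists_antideriv p
    refine ⟨q + C (f 0 - q.eval 0), ?_, ?_⟩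
    · refine lt_of_le_of_lt (Polynomial.degree_add_le _ _) ?_
      rw [max_lt_iff]
      constructor
      · refine hqdeg.trans_lt ?_
        rcases eq_or_ne p 0 with rfl | hp0
        · rw [Polynomial.degree_zero, WithBot.bot_add]
          exact_mod_cast WithBot.bot_lt_coe (k+1)
        · rw [Polynomial.degree_eq_natDegree hp0]
          have hlt : p.natDegree < k := by
            have := hdeg
            rwa [Polynomial.degree_eq_natDegree hp0, Nat.cast_lt] at this
          exact_mod_cast Nat.succ_lt_succ hlt
      · refine (Polynomial.degree_C_le).trans_lt ?_
        exact_mod_cast Nat.succ_pos k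
    · have hconst : ∀ t, f t - q.eval t = f 0 - q.eval 0 := by
        have hdq : Differentiable ℝ fun t => f t - q.eval t :=
          hdf.sub (Polynomial.differentiable q)
        have hder0 : ∀ t, deriv (fun t => f t - q.eval t) t = 0 := by
          intro t
          rw [deriv_fun_sub (hdf t) ((Polynomial.differentiable q) t)]
          rw [Polynomial.deriv, hq, ← hp t, sub_self]
        intro t
        exact is_const_of_deriv_eq_zero hdq hder0 t 0
      intro t
      have := hconst t
      simp only [Polynomial.eval_add, Polynomial.eval_C]
      linarith

lemma stepD (σ : ℝ → ℝ) (hcont : Continuous σ)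
    (hnotpoly : ¬ ∃ p : Polynomial ℝ, ∀ t : ℝ, σ t = p.eval t) (k : ℕ) :
    ∃ (φ : ContDiffBump (0:ℝ)) (θ : ℝ),
      iteratedDeriv k (φ.normed volume ⋆[lsmul ℝ ℝ, volume] σ) θ ≠ 0 := by
  classical
  by_contra hcon
  push_neg at hcon
  have hsmooth : ∀ φ : ContDiffBump (0:ℝ),
      ContDiff ℝ (⊤:ℕ∞) (φ.normed volume ⋆[lsmul ℝ ℝ, volume] σ) :=
    fun φ => φ.hasCompactSupport_normed.contDiff_convolution_left _
      φ.contDiff_normed hcont.locallyIntegrable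
  have hpoly : ∀ φ : ContDiffBump (0:ℝ), ∃ p : Polynomial ℝ, p.degree < (k:ℕ) ∧
      ∀ t, (φ.normed volume ⋆[lsmul ℝ ℝ, volume] σ) t = p.eval t :=
    fun φ => poly_of_iteratedDeriv_eq_zero k _ (hsmooth φ) (hcon φ)
  set φs : ℕ → ContDiffBump (0:ℝ) := fun n =>
    ⟨(n+2:ℝ)⁻¹, (n+1:ℝ)⁻¹, by positivity, by
      refine inv_strictAnti₀ (by positivity) (by linarith)⟩ with hφs
  have hrOut : Tendsto (fun n : ℕ => (φs n).rOut) atTop (𝓝 0) := by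
    have : (fun n : ℕ => (φs n).rOut) = fun n : ℕ => 1/((n:ℝ)+1) := by
      funext n; simp [hφs, one_div]
    rw [this]
    exact tendsto_one_div_add_atTop_nhds_zero_nat
  have hconv : ∀ t : ℝ, Tendsto (fun n => ((φs n).normed volume ⋆[lsmul ℝ ℝ, volume] σ) t)
      atTop (𝓝 (σ t)) :=
    fun t => ContDiffBump.convolution_tendsto_right_of_continuous hrOut hcont t
  set s : Finset ℕ := Finset.range k with hs
  set v : ℕ → ℝ := fun n => (n:ℝ) with hv
  have hinj : Set.InjOn v s := fun a _ b _ h => Nat.cast_injective h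
  choose p hdeg hp using hpoly
  set q : Polynomial ℝ := Lagrange.interpolate s v (fun i => σ (v i)) with hq
  refine hnotpoly ⟨q, fun t => ?_⟩
  have hcard : (s.card : WithBot ℕ) = (k : ℕ) := by rw [hs, Finset.card_range]
  have hrep : ∀ n, ((φs n).normed volume ⋆[lsmul ℝ ℝ, volume] σ) t
      = ∑ i ∈ s, ((φs n).normed volume ⋆[lsmul ℝ ℝ, volume] σ) (v i)
        * (Lagrange.basis s v i).eval t := by
    intro n
    have h1 : p (φs n) = Lagrange.interpolate s v fun i => (p (φs n)).eval (v i) :=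
      Lagrange.eq_interpolate hinj (by rw [hcard]; exact hdeg (φs n))
    rw [hp (φs n) t]
    conv_lhs => rw [h1]
    rw [Lagrange.interpolate_apply, Polynomial.eval_finset_sum]
    refine Finset.sum_congr rfl fun i _ => ?_
    rw [Polynomial.eval_mul, Polynomial.eval_C, hp (φs n) (v i)]
  have hlim2 : Tendsto (fun n => ((φs n).normed volume ⋆[lsmul ℝ ℝ, volume] σ) t)
      atTop (𝓝 (q.eval t)) := by
    simp_rw [hrep]
    rw [hq, Lagrange.interpolate_apply, Polynomial.eval_finset_sum]
    refine tendsto_finset_sum _ fun i _ => ?_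
    simp_rw [Polynomial.eval_mul, Polynomial.eval_C]
    exact (hconv (v i)).mul_const _
  exact tendsto_nhds_unique (hconv t) hlim2


lemma pow_mem (hcont : Continuous σ)
    (hnotpoly : ¬ ∃ p : Polynomial ℝ, ∀ t : ℝ, σ t = p.eval t)
    (k : ℕ) (w : Fin d → ℝ) : (Pw w : C(Kc d, ℝ))^k ∈ MM σ d := by
  obtain ⟨φ, θ, hθ⟩ := stepD σ hcont hnotpoly k
  set f : ℝ → ℝ := φ.normed volume ⋆[lsmul ℝ ℝ, volume] σ with hfd
  have hf : ContDiff ℝ (⊤:ℕ∞) f :=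
    φ.hasCompactSupport_normed.contDiff_convolution_left _
      φ.contDiff_normed hcont.locallyIntegrable
  have hbase : ∀ (w' : Fin d → ℝ) (b : ℝ) (g : C(Kc d, ℝ)),
      (∀ x, g x = f (dot w' x + b)) → g ∈ MM σ d :=
    fun w' b g hg => stepB σ hcont φ w' b g hg
  set c : ℝ := iteratedDeriv k f θ with hc
  have hmem := stepC σ f hf hbase k w θ
    ⟨fun x => dot w x ^ k * iteratedDeriv k f θ,
     ((cont_dot w).pow k).mul continuous_const⟩ (fun x => rfl)
  have heq : (Pw w : C(Kc d, ℝ))^k = c⁻¹ •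
      (⟨fun x => dot w x ^ k * iteratedDeriv k f θ,
        ((cont_dot w).pow k).mul continuous_const⟩ : C(Kc d, ℝ)) := by
    ext x
    simp only [ContinuousMap.smul_apply, ContinuousMap.coe_mk, smul_eq_mul, ContinuousMap.pow_apply]
    rw [show (Pw w) x = dot w x from rfl, ← hc]
    have hc0 : c ≠ 0 := hθ
    field_simp
  rw [heq]
  exact Submodule.smul_mem _ _ hmem

lemma exp_mem (hcont : Continuous σ)
    (hnotpoly : ¬ ∃ p : Polynomial ℝ, ∀ t : ℝ, σ t = p.eval t)
    (w : Fin d → ℝ) : NormedSpace.exp (Pw w : C(Kc d, ℝ)) ∈ MM σ d := by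
  have hsum : Summable fun n => (n.factorial : ℝ)⁻¹ • (Pw w : C(Kc d, ℝ))^n :=
    NormedSpace.expSeries_summable' (Pw w : C(Kc d, ℝ))
  have htend := hsum.hasSum.tendsto_sum_nat
  rw [NormedSpace.exp_eq_tsum ℝ]
  refine (isClosed_MM σ).mem_of_tendsto htend ?_
  filter_upwards with n
  exact Submodule.sum_mem _ fun i _ => Submodule.smul_mem _ _ (pow_mem σ hcont hnotpoly i w)

lemma E_apply (w : Fin d → ℝ) (x : Kc d) :
    NormedSpace.exp (Pw w : C(Kc d, ℝ)) x = Real.exp (dot w x) := by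
  have h := NormedSpace.map_exp (ContinuousMap.evalAlgHom ℝ ℝ x)
    (continuous_eval_const x) (Pw w : C(Kc d, ℝ))
  have h2 : (ContinuousMap.evalAlgHom ℝ ℝ x) (NormedSpace.exp (Pw w : C(Kc d, ℝ)))
      = NormedSpace.exp (dot w x) := h
  rw [Real.exp_eq_exp_ℝ]
  exact h2

lemma MM_eq_top (hcont : Continuous σ)
    (hnotpoly : ¬ ∃ p : Polynomial ℝ, ∀ t : ℝ, σ t = p.eval t) :
    MM σ d = ⊤ := by
  classical
  set E : (Fin d → ℝ) → C(Kc d, ℝ) := fun w => NormedSpace.exp (Pw w : C(Kc d, ℝ)) with hE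
  have hPadd : ∀ w v : Fin d → ℝ, (Pw (w + v) : C(Kc d, ℝ)) = Pw w + Pw v := by
    intro w v; ext x; simp [Pw, dot_add]
  have hmul : ∀ w v, E w * E v = E (w + v) := by
    intro w v
    rw [hE]
    simp only
    rw [hPadd, NormedSpace.exp_add]
  have hone : E 0 = 1 := by
    have : (Pw (0 : Fin d → ℝ) : C(Kc d, ℝ)) = 0 := by ext x; simp [Pw, dot]
    rw [hE]; simp only; rw [this, NormedSpace.exp_zero]
  set Mo : Submonoid C(Kc d, ℝ) :=
    { carrier := Set.range E
      one_mem' := ⟨0, hone⟩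
      mul_mem' := by rintro _ _ ⟨w, rfl⟩ ⟨v, rfl⟩; exact ⟨w + v, (hmul w v).symm⟩ } with hMo
  set A : Subalgebra ℝ C(Kc d, ℝ) := Algebra.adjoin ℝ (Set.range E) with hA
  have hAsub : Subalgebra.toSubmodule A = Submodule.span ℝ (Set.range E) := by
    rw [hA, Algebra.adjoin_eq_span]
    congr 1
    exact congrArg SetLike.coe (Submonoid.closure_eq Mo)
  have hsep : A.SeparatesPoints := by
    intro x y hxy
    set w : Fin d → ℝ := (x : Fin d → ℝ) - (y : Fin d → ℝ) with hw
    refine ⟨E w, ⟨E w, Algebra.subset_adjoin ⟨w, rfl⟩, rfl⟩, ?_⟩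
    have hdot : dot w y < dot w x := by
      have hsum : dot w x - dot w y = ∑ j, ((x : Fin d → ℝ) j - (y : Fin d → ℝ) j)^2 := by
        simp only [dot, hw, Pi.sub_apply]
        rw [← Finset.sum_sub_distrib]
        refine Finset.sum_congr rfl fun j _ => by ring
      have hne : ∃ j, (x : Fin d → ℝ) j ≠ (y : Fin d → ℝ) j := by
        by_contra hcon
        push_neg at hcon
        exact hxy (Subtype.ext (funext hcon))
      obtain ⟨j, hj⟩ := hne
      have hpos : 0 < ∑ j, ((x : Fin d → ℝ) j - (y : Fin d → ℝ) j)^2 :=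
        Finset.sum_pos' (fun i _ => sq_nonneg _)
          ⟨j, Finset.mem_univ j, by have := sub_ne_zero.2 hj; positivity⟩
      linarith [hsum]
    rw [hE]
    simp only
    rw [E_apply, E_apply]
    exact ne_of_gt (Real.exp_lt_exp.2 hdot)
  have htop := ContinuousMap.subalgebra_topologicalClosure_eq_top_of_separatesPoints A hsep
  have hAle : (A : Set C(Kc d, ℝ)) ⊆ (MM σ d : Set C(Kc d, ℝ)) := by
    intro g hg
    have h1 : g ∈ Submodule.span ℝ (Set.range E) := by
      rw [← hAsub]; exact hg
    refine Submodule.span_le.2 ?_ h1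
    rintro _ ⟨w, rfl⟩
    exact exp_mem σ hcont hnotpoly w
  rw [eq_top_iff]
  intro g _
  have hg : g ∈ closure (A : Set C(Kc d, ℝ)) := by
    have : (A.topologicalClosure : Set C(Kc d, ℝ)) = Set.univ := by
      rw [htop]; rfl
    have h2 : g ∈ (A.topologicalClosure : Set C(Kc d, ℝ)) := this ▸ Set.mem_univ g
    exact h2
  have := closure_mono hAle hg
  rwa [(isClosed_MM σ).closure_eq] at this

end
end UANP

open UANP in
/-- Leshno–Lin–Pinkus–Schocken: for a continuous activation `σ` that is not a
polynomial, the shallow neural networks are dense in `C([0,1]^d, ℝ)` (with the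
supremum norm, which induces the topology of `C(K, ℝ)` for compact `K`). -/
theorem universal_approximation_nonpolynomial
    (σ : ℝ → ℝ) (hcont : Continuous σ)
    (hnotpoly : ¬ ∃ p : Polynomial ℝ, ∀ t : ℝ, σ t = p.eval t) :
    ∀ d : ℕ, 1 ≤ d →
      Dense {g : C(Set.Icc (0 : Fin d → ℝ) 1, ℝ) |
        ∃ (m : ℕ), 1 ≤ m ∧
          ∃ (a : Fin m → ℝ) (w : Fin m → Fin d → ℝ) (b : Fin m → ℝ),
            ∀ x : Set.Icc (0 : Fin d → ℝ) 1,
              g x = ∑ i : Fin m, a i * σ (∑ j : Fin d, w i j * (x : Fin d → ℝ) j + b i)} := by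
  intro d _
  classical
  set T : Submodule ℝ C(Kc d, ℝ) :=
    { carrier := {g : C(Kc d, ℝ) |
        ∃ (m : ℕ), 1 ≤ m ∧
          ∃ (a : Fin m → ℝ) (w : Fin m → Fin d → ℝ) (b : Fin m → ℝ),
            ∀ x : Kc d,
              g x = ∑ i : Fin m, a i * σ (∑ j : Fin d, w i j * (x : Fin d → ℝ) j + b i)}
      zero_mem' := ⟨1, le_refl 1, fun _ => 0, fun _ => 0, fun _ => 0, fun x => by simp⟩
      add_mem' := by
        rintro g₁ g₂ ⟨m₁, hm₁, a₁, w₁, b₁, h₁⟩ ⟨m₂, hm₂, a₂, w₂, b₂, h₂⟩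
        refine ⟨m₁ + m₂, by omega, Fin.append a₁ a₂, Fin.append w₁ w₂, Fin.append b₁ b₂,
          fun x => ?_⟩
        rw [ContinuousMap.add_apply, h₁ x, h₂ x, Fin.sum_univ_add]
        congr 1
        · exact Finset.sum_congr rfl fun i _ => by rw [Fin.append_left, Fin.append_left, Fin.append_left]
        · exact Finset.sum_congr rfl fun i _ => by rw [Fin.append_right, Fin.append_right, Fin.append_right]
      smul_mem' := by
        rintro c g ⟨m, hm, a, w, b, h⟩
        refine ⟨m, hm, fun i => c * a i, w, b, fun x => ?_⟩
        rw [ContinuousMap.smul_apply, h x, smul_eq_mul, Finset.mul_sum]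
        exact Finset.sum_congr rfl fun i _ => by ring } with hT
  have hSle : SS σ d ⊆ (T : Set C(Kc d, ℝ)) := by
    rintro g ⟨w, b, hg⟩
    refine ⟨1, le_refl 1, fun _ => 1, fun _ => w, fun _ => b, fun x => ?_⟩
    rw [hg x]
    simp [dot]
  have hspan : (Submodule.span ℝ (SS σ d) : Set C(Kc d, ℝ)) ⊆ (T : Set C(Kc d, ℝ)) := by
    exact Submodule.span_le.2 hSle
  have hdense : Dense (Submodule.span ℝ (SS σ d) : Set C(Kc d, ℝ)) := by
    rw [dense_iff_closure_eq]
    have h1 : closure (Submodule.span ℝ (SS σ d) : Set C(Kc d, ℝ)) = (MM σ d : Set C(Kc d, ℝ)) :=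
      (Submodule.topologicalClosure_coe _).symm
    rw [h1, MM_eq_top σ hcont hnotpoly]
    rfl
  exact hdense.mono hspan
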